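/- Let C_n be the cycle graph on n ≥ 3 vertices and let f be a divisor on C_n with deg(f) ≥ 1. Then f is L-effective. -/

import Mathlib

/-- A finite loopless multigraph on vertex set `V`, given by its symmetric
edge-multiplicity function `e`. -/
structure Multigraph (V : Type*) [Fintype V] [DecidableEq V] where
  e : V → V → ℕ
  symm : ∀ u v, e u v = e v u
  loopless : ∀ v, e v v = 0

namespace Multigraph

variable {V : Type*} [Fintype V] [DecidableEq V]

/-- The degree of a vertex of a multigraph. -/
def vdeg (G : Multigraph V) (v : V) : ℕ := ∑ u, G.e v u

/-- The number of edges of a multigraph. -/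
def edgeCount (G : Multigraph V) : ℕ := (∑ u, ∑ v, G.e u v) / 2

/-- The underlying simple graph (adjacency) of a multigraph. -/
def toSimple (G : Multigraph V) : SimpleGraph V where
  Adj u v := G.e u v ≠ 0
  symm := by constructor; intro u v h; rwa [G.symm]
  loopless := by constructor; intro v h; exact h (G.loopless v)

/-- A multigraph is connected if its underlying simple graph is. -/
def Connected (G : Multigraph V) : Prop := G.toSimple.Connected

/-- The degree of a divisor `f : V → ℤ`. -/
def degree (f : V → ℤ) : ℤ := ∑ v, f v

/-- A divisor is effective if all its values are nonnegative. -/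
def Effective (f : V → ℤ) : Prop := ∀ v, 0 ≤ f v

/-- The divisor `x · Δ_G`, where `Δ_G` is the Laplacian matrix of `G`. -/
def lapApply (G : Multigraph V) (x : V → ℤ) : V → ℤ :=
  fun v => x v * (G.vdeg v : ℤ) - ∑ u, x u * (G.e u v : ℤ)

/-- Linear equivalence of divisors: `g = f + x Δ_G` for some `x : V → ℤ`. -/
def LinEquiv (G : Multigraph V) (f g : V → ℤ) : Prop :=
  ∃ x : V → ℤ, g = f + G.lapApply x

/-- A divisor is L-effective if it is linearly equivalent to an effective divisor. -/
def LEffective (G : Multigraph V) (f : V → ℤ) : Prop :=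
  ∃ g : V → ℤ, G.LinEquiv f g ∧ Effective g

/-- The Baker–Norine rank of a divisor: `-1` if `f` is not L-effective, and
otherwise the largest `r ≥ 0` such that `f - λ` is L-effective for every
effective divisor `λ` of degree `r`. -/
noncomputable def rank (G : Multigraph V) (f : V → ℤ) : ℤ :=
  sSup ({-1} ∪ {r : ℤ | 0 ≤ r ∧
    ∀ l : V → ℤ, Effective l → degree l = r → G.LEffective (f - l)})

/-- The divisor `ε_v`. -/
def epsDiv (v : V) : V → ℤ := fun u => if u = v then 1 else 0

/-- A tree: a connected acyclic (multi)graph. -/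
def IsTree (G : Multigraph V) : Prop :=
  G.toSimple.IsTree ∧ ∀ u v, G.e u v ≤ 1

/-- A cycle graph: connected, and every vertex has degree 2. -/
def IsCycleGraph (G : Multigraph V) : Prop :=
  G.Connected ∧ ∀ v, G.vdeg v = 2

/-- An edge: two vertices joined by a single edge. -/
def IsEdgeGraph (G : Multigraph V) : Prop :=
  Fintype.card V = 2 ∧ G.Connected ∧ ∀ u v, G.e u v ≤ 1

/-- A good divisor (on a cycle): degree `0` and linearly equivalent to `0`. -/
def Good (G : Multigraph V) (f : V → ℤ) : Prop :=
  degree f = 0 ∧ G.LinEquiv f 0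

/-- A bad divisor (on a cycle): degree `0` and not linearly equivalent to `0`. -/
def Bad (G : Multigraph V) (f : V → ℤ) : Prop :=
  degree f = 0 ∧ ¬ G.LinEquiv f 0

/-- The induced sub-multigraph on a finite set `S` of vertices. -/
def induce (G : Multigraph V) (S : Finset V) : Multigraph {x // x ∈ S} where
  e a b := G.e a.1 b.1
  symm := fun a b => G.symm a.1 b.1
  loopless := fun a => G.loopless a.1

/-- `v` decomposes the induced subgraph of `G` on `S` into the induced
subgraphs on `V1` and `U`: they cover `S`, meet exactly in `v`, are both
connected, and there is no edge between `V1 \ {v}` and `U \ {v}`. -/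
def DecompOn (G : Multigraph V) (S : Finset V) (v : V) (V1 U : Finset V) : Prop :=
  V1 ∪ U = S ∧ V1 ∩ U = {v} ∧
  (G.induce V1).Connected ∧ (G.induce U).Connected ∧
  ∀ a ∈ V1, ∀ b ∈ U, a ≠ v → b ≠ v → G.e a b = 0

/-- `v` decomposes `G` into the induced subgraphs on `V1` and `U`. -/
def Decomp (G : Multigraph V) (v : V) (V1 U : Finset V) : Prop :=
  G.DecompOn Finset.univ v V1 U

/-- The contraction `f_{G/H}` of a divisor `f`, where `H = G(U)` and
`G/H = G(V1)`, the cut vertex being `v`. -/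
def contractDiv (f : V → ℤ) (v : V) (V1 U : Finset V) : {x // x ∈ V1} → ℤ :=
  fun u => if u.1 = v then ∑ w ∈ U, f w else f u.1

/-- The zero `f_{N(H)}` of a divisor `f`, where `H = G(U)`, the cut vertex
being `v`. -/
def zeroDiv (f : V → ℤ) (v : V) (U : Finset V) : {x // x ∈ U} → ℤ :=
  fun u => if u.1 = v then - ∑ w ∈ U.erase v, f w else f u.1

/-- `ε_v` as a divisor on an induced subgraph. -/
def epsDivOn (S : Finset V) (v : V) : {x // x ∈ S} → ℤ :=
  fun u => if u.1 = v then 1 else 0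

/-- A simple cycle of `G`, given as a sub-multigraph (an edge-multiplicity
function bounded by that of `G`) which is connected on its support and in
which every vertex of its (nonempty) support has degree 2. -/
def IsCycleSubgraph (G : Multigraph V) (h : V → V → ℕ) : Prop :=
  (∀ u v, h u v ≤ G.e u v) ∧ (∀ u v, h u v = h v u) ∧
  (∀ v, (∑ u, h v u = 0) ∨ (∑ u, h v u = 2)) ∧
  (∃ v, ∑ u, h v u ≠ 0) ∧
  (∀ v w, (∑ u, h v u ≠ 0) → (∑ u, h w u ≠ 0) →
    Relation.ReflTransGen (fun a b => h a b ≠ 0) v w)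

/-- The vertex support of a sub-multigraph. -/
def cycleSupport (h : V → V → ℕ) : Finset V :=
  Finset.univ.filter (fun v => ∑ u, h v u ≠ 0)

/-- A cactus: a connected multigraph in which any two distinct simple cycles
have at most one vertex in common (in particular every edge has multiplicity
at most 2, since parallel edges form 2-cycles). -/
def IsCactus (G : Multigraph V) : Prop :=
  G.Connected ∧ (∀ u v, G.e u v ≤ 2) ∧
  ∀ h₁ h₂ : V → V → ℕ, G.IsCycleSubgraph h₁ → G.IsCycleSubgraph h₂ → h₁ ≠ h₂ →
    (cycleSupport h₁ ∩ cycleSupport h₂).card ≤ 1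

/-- One step of a block elimination scheme: `G(S')` is obtained from `G(S)`
by contracting a free block (an edge or a cycle) `G(U)` at the vertex `v`. -/
def BlockStep (G : Multigraph V) (S S' : Finset V) : Prop :=
  ∃ (v : V) (U : Finset V), G.DecompOn S v S' U ∧
    ((G.induce U).IsEdgeGraph ∨ (G.induce U).IsCycleGraph)

/-- A block elimination scheme: a sequence of contractions of free blocks,
starting from `G` and ending at a single vertex. -/
def HasBlockEliminationScheme (G : Multigraph V) : Prop :=
  ∃ (k : ℕ) (S : ℕ → Finset V), S 0 = Finset.univ ∧ (S k).card = 1 ∧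
    ∀ i < k, G.BlockStep (S i) (S (i + 1))

end Multigraph

open Multigraph

variable {V : Type*} [Fintype V] [DecidableEq V]


namespace CycleAux

open Multigraph

variable {V : Type*} [Fintype V] [DecidableEq V]

/-- Connectivity closure: a nonempty edge-closed set of vertices is everything. -/
lemma closed_all (G : Multigraph V) (hc : G.Connected) (S : Set V) (a : V) (ha : a ∈ S)
    (hcl : ∀ x ∈ S, ∀ b, G.e x b ≠ 0 → b ∈ S) (v : V) : v ∈ S := by
  have H : ∀ (x y : V) (_ : G.toSimple.Walk x y), x ∈ S → y ∈ S := by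
    intro x y p
    induction p with
    | nil => exact id
    | cons h _ ih => intro hx; exact ih (hcl _ hx _ h)
  obtain ⟨p⟩ := hc.preconnected a v
  exact H _ _ p ha

lemma e_le_one (G : Multigraph V) (hC : G.IsCycleGraph) (hcard : 3 ≤ Fintype.card V)
    (u v : V) : G.e u v ≤ 1 := by
  by_contra h
  push_neg at h
  have huv : u ≠ v := by
    intro he; rw [he, G.loopless] at h; omega
  have key : ∀ a b : V, 2 ≤ G.e a b → ∀ c, c ≠ b → G.e a c = 0 := by
    intro a b hab c hcb
    have h1 : G.e a b + G.e a c ≤ ∑ x, G.e a x := by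
      have : ({b, c} : Finset V).sum (G.e a) ≤ ∑ x, G.e a x :=
        Finset.sum_le_sum_of_subset (Finset.subset_univ _)
      rwa [Finset.sum_pair (Ne.symm hcb)] at this
    have h2 : ∑ x, G.e a x = 2 := hC.2 a
    omega
  have hvu : 2 ≤ G.e v u := by rw [G.symm]; omega
  have hS : ∀ x ∈ ({u, v} : Set V), ∀ b, G.e x b ≠ 0 → b ∈ ({u, v} : Set V) := by
    intro x hx b hb
    simp only [Set.mem_insert_iff, Set.mem_singleton_iff] at hx ⊢
    rcases hx with hx | hx
    · rw [hx] at hb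
      by_contra hbn
      push_neg at hbn
      exact hb (key u v h b hbn.2)
    · rw [hx] at hb
      by_contra hbn
      push_neg at hbn
      exact hb (key v u hvu b hbn.1)
  have hall : ∀ w : V, w ∈ ({u, v} : Set V) :=
    closed_all G hC.1 _ u (Set.mem_insert _ _) hS
  have : Fintype.card V ≤ 2 := by
    have hsub : (Finset.univ : Finset V) ⊆ {u, v} := by
      intro w _
      have := hall w
      simp only [Set.mem_insert_iff, Set.mem_singleton_iff] at this
      rcases this with h' | h' <;> simp [h']
    calc Fintype.card V = (Finset.univ : Finset V).card := rfl
      _ ≤ ({u, v} : Finset V).card := Finset.card_le_card hsub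
      _ ≤ 2 := Finset.card_le_two
  omega

lemma eq_nbrs (G : Multigraph V) (hC : G.IsCycleGraph)
    (v a b u : V) (ha : G.e v a ≠ 0) (hb : G.e v b ≠ 0) (hab : a ≠ b)
    (hu : G.e v u ≠ 0) : u = a ∨ u = b := by
  by_contra h
  push_neg at h
  obtain ⟨hua, hub⟩ := h
  have h3 : ({a, b, u} : Finset V).card = 3 := by
    rw [Finset.card_insert_of_notMem, Finset.card_insert_of_notMem] <;>
      simp [hab, Ne.symm hua, Ne.symm hub]
  have hge : 3 ≤ ({a, b, u} : Finset V).sum (G.e v) := by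
    calc (3 : ℕ) = ({a, b, u} : Finset V).card := h3.symm
      _ = ({a, b, u} : Finset V).sum (fun _ => 1) := by rw [Finset.sum_const, smul_eq_mul, mul_one]
      _ ≤ ({a, b, u} : Finset V).sum (G.e v) := by
          apply Finset.sum_le_sum
          intro x hx
          rcases Finset.mem_insert.mp hx with h' | hx'
          · subst h'; omega
          rcases Finset.mem_insert.mp hx' with h' | h'
          · subst h'; omega
          · rw [Finset.mem_singleton] at h'; subst h'; omega
  have hle : ({a, b, u} : Finset V).sum (G.e v) ≤ ∑ x, G.e v x :=
    Finset.sum_le_sum_of_subset (Finset.subset_univ _)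
  have h2 : ∑ x, G.e v x = 2 := hC.2 v
  omega

lemma two_nbrs (G : Multigraph V) (hC : G.IsCycleGraph) (hcard : 3 ≤ Fintype.card V)
    (v : V) : ∃ a b : V, a ≠ b ∧ G.e v a ≠ 0 ∧ G.e v b ≠ 0 := by
  have h2 : ∑ x, G.e v x = 2 := hC.2 v
  have ha : ∃ a, G.e v a ≠ 0 := by
    by_contra h
    push_neg at h
    have : ∑ x, G.e v x = 0 := Finset.sum_eq_zero (fun x _ => h x)
    omega
  obtain ⟨a, ha⟩ := ha
  have hb : ∃ b, b ≠ a ∧ G.e v b ≠ 0 := by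
    by_contra h
    push_neg at h
    have : ∑ x, G.e v x = G.e v a := by
      apply Finset.sum_eq_single
      · intro b _ hba
        by_contra hb0
        exact hb0 (h b hba)
      · intro h'; exact absurd (Finset.mem_univ a) h'
    have := e_le_one G hC hcard v a
    omega
  obtain ⟨b, hba, hb⟩ := hb
  exact ⟨a, b, Ne.symm hba, ha, hb⟩

/-- The walk-building recursion: state is a pair of consecutive vertices. -/
noncomputable def wkP (nxt : V → V → V) (v0 v1 : V) : ℕ → V × V
  | 0 => (v0, v1)
  | k+1 => ((wkP nxt v0 v1 k).2, nxt (wkP nxt v0 v1 k).1 (wkP nxt v0 v1 k).2)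

noncomputable def wk (nxt : V → V → V) (v0 v1 : V) (k : ℕ) : V := (wkP nxt v0 v1 k).1

lemma wk_zero (nxt : V → V → V) (v0 v1 : V) : wk nxt v0 v1 0 = v0 := rfl

lemma wk_one (nxt : V → V → V) (v0 v1 : V) : wk nxt v0 v1 1 = v1 := rfl

lemma wk_succ_succ (nxt : V → V → V) (v0 v1 : V) (k : ℕ) :
    wk nxt v0 v1 (k+2) = nxt (wk nxt v0 v1 k) (wk nxt v0 v1 (k+1)) := by
  show (wkP nxt v0 v1 (k+2)).1 = _
  have h1 : wkP nxt v0 v1 (k+2) = ((wkP nxt v0 v1 (k+1)).2,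
      nxt (wkP nxt v0 v1 (k+1)).1 (wkP nxt v0 v1 (k+1)).2) := rfl
  have h2 : wkP nxt v0 v1 (k+1) = ((wkP nxt v0 v1 k).2,
      nxt (wkP nxt v0 v1 k).1 (wkP nxt v0 v1 k).2) := rfl
  rw [h1, h2]
  rfl

/-- Main structural lemma: a connected 2-regular multigraph on `n ≥ 3`
vertices is a cyclic enumeration. -/
lemma cycle_structure (G : Multigraph V) (hC : G.IsCycleGraph)
    (hcard : 3 ≤ Fintype.card V) :
    ∃ w : ℕ → V,
      (∀ k l, k < Fintype.card V → l < Fintype.card V → w k = w l → k = l) ∧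
      (∀ v, ∃ k, k < Fintype.card V ∧ w k = v) ∧
      (∀ k, G.e (w k) (w (k+1)) = 1) ∧
      w (Fintype.card V) = w 0 := by
  classical
  set n := Fintype.card V with hn
  -- a "next" function: some neighbour of `v` different from `p`
  have hnext : ∀ p v : V, ∃ u, G.e v u ≠ 0 ∧ u ≠ p := by
    intro p v
    obtain ⟨a, b, hab, ha, hb⟩ := two_nbrs G hC hcard v
    by_cases hpa : a = p
    · exact ⟨b, hb, by rw [← hpa]; exact hab.symm⟩
    · exact ⟨a, ha, hpa⟩
  let nxt : V → V → V := fun p v => (hnext p v).choose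
  have hnxt1 : ∀ p v, G.e v (nxt p v) ≠ 0 := fun p v => (hnext p v).choose_spec.1
  have hnxt2 : ∀ p v, nxt p v ≠ p := fun p v => (hnext p v).choose_spec.2
  have hVne : Nonempty V := by
    rw [← Fintype.card_pos_iff]; omega
  obtain ⟨v0⟩ := hVne
  let w : ℕ → V := wk nxt v0 (nxt v0 v0)
  have hw0 : w 0 = v0 := rfl
  have hw1 : w 1 = nxt v0 v0 := rfl
  have hwss : ∀ k, w (k+2) = nxt (w k) (w (k+1)) := fun k => wk_succ_succ nxt v0 _ k
  -- adjacency along the walk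
  have hA : ∀ k, G.e (w k) (w (k+1)) ≠ 0 := by
    intro k
    cases k with
    | zero => rw [hw0, hw1]; exact hnxt1 v0 v0
    | succ m => rw [hwss m]; exact hnxt1 (w m) (w (m+1))
  have hB : ∀ k, w (k+2) ≠ w k := by
    intro k; rw [hwss k]; exact hnxt2 (w k) (w (k+1))
  have hA1 : ∀ k, G.e (w k) (w (k+1)) = 1 := by
    intro k
    have := e_le_one G hC hcard (w k) (w (k+1))
    have := hA k
    omega
  have hne : ∀ k, w (k+1) ≠ w k := by
    intro k h
    have := hA k
    rw [h, G.loopless] at this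
    exact this rfl
  -- the first repetition time
  have hex : ∃ j, ∃ i, i < j ∧ j ≤ n ∧ w i = w j := by
    have hlt : Fintype.card V < Fintype.card (Fin (n+1)) := by
      rw [Fintype.card_fin]; omega
    obtain ⟨i, j, hij, hw⟩ := Fintype.exists_ne_map_eq_of_card_lt
      (fun i : Fin (n+1) => w i.1) hlt
    rcases lt_or_gt_of_ne (fun h : i.1 = j.1 => hij (Fin.ext h)) with h' | h'
    · exact ⟨j.1, i.1, h', by omega, hw⟩
    · exact ⟨i.1, j.1, h', by omega, hw.symm⟩
  have hexJ : ∃ j, ∃ i, i < j ∧ w i = w j := by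
    obtain ⟨j, i, h1, _, h3⟩ := hex
    exact ⟨j, i, h1, h3⟩
  let J := Nat.find hexJ
  obtain ⟨i, hiJ, hwiJ⟩ : ∃ i, i < J ∧ w i = w J := Nat.find_spec hexJ
  have hJle : J ≤ n := by
    obtain ⟨j, i, h1, h2, h3⟩ := hex
    exact le_trans (Nat.find_le ⟨i, h1, h3⟩) h2
  -- injectivity below J
  have hinj : ∀ k l, k < J → l < J → w k = w l → k = l := by
    intro k l hk hl hkl
    by_contra hne'
    rcases lt_or_gt_of_ne hne' with h' | h'
    · exact Nat.find_min hexJ hl ⟨k, h', hkl⟩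
    · exact Nat.find_min hexJ hk ⟨l, h', hkl.symm⟩
  have hJ3 : 3 ≤ J := by
    by_contra h
    push_neg at h
    interval_cases J
    · omega
    · -- J = 1 : i = 0, w 0 = w 1
      have : i = 0 := by omega
      rw [this] at hwiJ
      exact hne 0 hwiJ.symm
    · -- J = 2
      rcases (by omega : i = 0 ∨ i = 1) with h' | h'
      · rw [h'] at hwiJ; exact hB 0 hwiJ.symm
      · rw [h'] at hwiJ; exact hne 1 hwiJ.symm
  -- the repetition is with the start
  have hi0 : i = 0 := by
    by_contra h0
    have hi1 : 1 ≤ i := Nat.one_le_iff_ne_zero.mpr h0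
    have hi1J : i + 1 < J := by
      rcases Nat.lt_or_ge (i+1) J with h' | h'
      · exact h'
      · exfalso
        have : i + 1 = J := by omega
        rw [← this] at hwiJ
        exact hne i hwiJ.symm
    -- w (J-1) is a neighbour of w J = w i
    have hJA : G.e (w i) (w (J-1)) ≠ 0 := by
      have := hA (J-1)
      rw [Nat.sub_add_cancel (by omega : 1 ≤ J), ← hwiJ] at this
      rw [G.symm]
      exact this
    have hprev : G.e (w i) (w (i-1)) ≠ 0 := by
      have := hA (i-1)
      rw [Nat.sub_add_cancel hi1] at this
      rw [G.symm]
      exact this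
    have hsucc : G.e (w i) (w (i+1)) ≠ 0 := hA i
    have hdist : w (i-1) ≠ w (i+1) := by
      intro h'
      have := hinj _ _ (by omega) hi1J h'
      omega
    rcases eq_nbrs G hC _ _ _ _ hprev hsucc hdist hJA with h' | h'
    · have := hinj _ _ (by omega) (by omega) h'
      omega
    · have := hinj _ _ (by omega) hi1J h'
      have hJi2 : J = i + 2 := by omega
      rw [hJi2] at hwiJ
      exact hB i hwiJ.symm
  rw [hi0] at hwiJ
  -- the support of the walk is everything
  have hsurj : ∀ v : V, ∃ k, k < J ∧ w k = v := by
    intro v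
    have hcl : ∀ x ∈ {v : V | ∃ k, k < J ∧ w k = v}, ∀ b, G.e x b ≠ 0 →
        b ∈ {v : V | ∃ k, k < J ∧ w k = v} := by
      rintro x ⟨k, hk, rfl⟩ b hb
      by_cases hk0 : k = 0
      · -- neighbours of w 0 are w 1 and w (J-1)
        rw [hk0] at hb
        have h1 : G.e (w 0) (w 1) ≠ 0 := hA 0
        have h2 : G.e (w 0) (w (J-1)) ≠ 0 := by
          have := hA (J-1)
          rw [Nat.sub_add_cancel (by omega : 1 ≤ J), ← hwiJ] at this
          rw [G.symm]; exact this
        have hd : w 1 ≠ w (J-1) := by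
          intro h'
          have := hinj _ _ (by omega) (by omega) h'
          omega
        rcases eq_nbrs G hC _ _ _ _ h1 h2 hd hb with h' | h'
        · exact ⟨1, by omega, h'.symm⟩
        · exact ⟨J-1, by omega, h'.symm⟩
      · by_cases hkJ : k = J - 1
        · -- neighbours of w (J-1) are w (J-2) and w J = w 0
          have h1 : G.e (w k) (w (k-1)) ≠ 0 := by
            have := hA (k-1)
            rw [Nat.sub_add_cancel (by omega : 1 ≤ k)] at this
            rw [G.symm]; exact this
          have h2 : G.e (w k) (w 0) ≠ 0 := by
            have := hA k
            have hk1 : k + 1 = J := by omega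
            rw [hk1, ← hwiJ] at this
            exact this
          have hd : w (k-1) ≠ w 0 := by
            intro h'
            have := hinj _ _ (by omega) (by omega) h'
            omega
          rcases eq_nbrs G hC _ _ _ _ h1 h2 hd hb with h' | h'
          · exact ⟨k-1, by omega, h'.symm⟩
          · exact ⟨0, by omega, h'.symm⟩
        · -- interior: neighbours are w (k-1) and w (k+1)
          have h1 : G.e (w k) (w (k-1)) ≠ 0 := by
            have := hA (k-1)
            rw [Nat.sub_add_cancel (by omega : 1 ≤ k)] at this
            rw [G.symm]; exact this
          have h2 : G.e (w k) (w (k+1)) ≠ 0 := hA k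
          have hd : w (k-1) ≠ w (k+1) := by
            intro h'
            have := hinj _ _ (by omega) (by omega) h'
            omega
          rcases eq_nbrs G hC _ _ _ _ h1 h2 hd hb with h' | h'
          · exact ⟨k-1, by omega, h'.symm⟩
          · exact ⟨k+1, by omega, h'.symm⟩
    exact closed_all G hC.1 {v : V | ∃ k, k < J ∧ w k = v} (w 0)
      ⟨0, by omega, rfl⟩ hcl v
  -- J = n
  have hJn : J = n := by
    have hcardim : ((Finset.range J).image w).card = J := by
      rw [Finset.card_image_of_injOn, Finset.card_range]
      intro a ha b hb hab
      exact hinj a b (Finset.mem_range.mp ha) (Finset.mem_range.mp hb) hab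
    have him : (Finset.range J).image w = Finset.univ := by
      apply Finset.eq_univ_of_forall
      intro v
      obtain ⟨k, hk, hkv⟩ := hsurj v
      exact Finset.mem_image.mpr ⟨k, Finset.mem_range.mpr hk, hkv⟩
    rw [him] at hcardim
    rw [← hcardim]
    rfl
  refine ⟨w, ?_, ?_, hA1, ?_⟩
  · intro k l hk hl
    rw [← hJn] at hk hl
    exact hinj k l hk hl
  · intro v
    obtain ⟨k, hk, hkv⟩ := hsurj v
    exact ⟨k, by omega, hkv⟩
  · rw [← hJn, ← hwiJ]

lemma nbr_decomp (G : Multigraph V) (hC : G.IsCycleGraph) (hcard : 3 ≤ Fintype.card V)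
    (c a b : V) (ha : G.e c a ≠ 0) (hb : G.e c b ≠ 0) (hab : a ≠ b) (u : V) :
    (G.e u c : ℤ) = (if u = a then 1 else 0) + (if u = b then 1 else 0) := by
  by_cases hua : u = a
  · subst hua
    have h1 : G.e u c = 1 := by
      have := e_le_one G hC hcard c u
      have hs := G.symm u c
      rw [G.symm] at ha
      omega
    rw [h1, if_pos rfl, if_neg hab]
    norm_num
  · by_cases hub : u = b
    · subst hub
      have h1 : G.e u c = 1 := by
        have := e_le_one G hC hcard c u
        have hs := G.symm u c
        rw [G.symm] at hb
        omega
      rw [h1, if_neg hua, if_pos rfl]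
      norm_num
    · have h0 : G.e u c = 0 := by
        by_contra h'
        have h'' : G.e c u ≠ 0 := by rw [G.symm]; exact h'
        rcases eq_nbrs G hC c a b u ha hb hab h'' with h3 | h3
        · exact hua h3
        · exact hub h3
      rw [h0, if_neg hua, if_neg hub]
      norm_num

lemma pair_sum (G : Multigraph V) (x : V → ℤ) (c a b : V)
    (hdec : ∀ u, (G.e u c : ℤ) = (if u = a then 1 else 0) + (if u = b then 1 else 0)) :
    ∑ u, x u * (G.e u c : ℤ) = x a + x b := by
  have h : ∀ u, x u * (G.e u c : ℤ) =
      (if u = a then x u else 0) + (if u = b then x u else 0) := by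
    intro u
    rw [hdec u]
    split_ifs <;> ring
  rw [Finset.sum_congr rfl (fun u _ => h u), Finset.sum_add_distrib,
    Finset.sum_ite_eq' Finset.univ a x, Finset.sum_ite_eq' Finset.univ b x,
    if_pos (Finset.mem_univ a), if_pos (Finset.mem_univ b)]

end CycleAux

/-- on a cycle with `n ≥ 3` vertices, every divisor of degree
at least `1` is L-effective. -/
theorem cycle_LEffective_of_pos_degree (G : Multigraph V)
    (hC : G.IsCycleGraph) (hcard : 3 ≤ Fintype.card V)
    (f : V → ℤ) (hdeg : 1 ≤ degree f) :
    G.LEffective f := by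
  classical
  obtain ⟨w, hinj, hsurj, hadj, hwrap⟩ := CycleAux.cycle_structure G hC hcard
  set n := Fintype.card V with hn
  -- index function
  have hidx : ∀ v : V, ∃ k, k < n ∧ w k = v := hsurj
  let idx : V → ℕ := fun v => (hidx v).choose
  have hidx1 : ∀ v, idx v < n := fun v => (hidx v).choose_spec.1
  have hidx2 : ∀ v, w (idx v) = v := fun v => (hidx v).choose_spec.2
  have hidxw : ∀ i, i < n → idx (w i) = i := by
    intro i hi
    exact hinj _ _ (hidx1 _) hi (hidx2 _)
  -- prefix sums
  let F : ℕ → ℤ := fun i => f (w i)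
  let s : ℕ → ℤ := fun i => ∑ t ∈ Finset.range i, F t
  have hsn : s n = degree f := by
    have him : (Finset.range n).image w = Finset.univ := by
      apply Finset.eq_univ_of_forall
      intro v
      obtain ⟨k, hk, hkv⟩ := hsurj v
      exact Finset.mem_image.mpr ⟨k, Finset.mem_range.mpr hk, hkv⟩
    have : degree f = ∑ i ∈ Finset.range n, f (w i) := by
      rw [degree, ← him, Finset.sum_image]
      intro a ha b hb hab
      exact hinj a b (Finset.mem_range.mp ha) (Finset.mem_range.mp hb) hab
    rw [this]
  have hd1 : 1 ≤ s n := by rw [hsn]; exact hdeg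
  -- the correction data
  let S : ℤ := ∑ i ∈ Finset.range n, s i
  let q : ℤ := S / (n : ℤ)
  let r : ℤ := S % (n : ℤ)
  have hnpos : (0 : ℤ) < (n : ℤ) := by exact_mod_cast (by omega : 0 < n)
  have hr0 : 0 ≤ r := Int.emod_nonneg S (by omega)
  have hrn : r < (n : ℤ) := Int.emod_lt_of_pos S hnpos
  let t : ℕ := r.toNat
  have ht : (t : ℤ) = r := Int.toNat_of_nonneg hr0
  have htn : t < n := by
    have : (t : ℤ) < (n : ℤ) := by rw [ht]; exact hrn
    exact_mod_cast this
  have hSqr : S = (n : ℤ) * q + r := (Int.mul_ediv_add_emod S (n : ℤ)).symm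
  let δ : ℕ → ℤ := fun i => if n ≤ i + t then 1 else 0
  have hδmono : ∀ i j, i ≤ j → δ i ≤ δ j := by
    intro i j hij
    show (if n ≤ i + t then (1:ℤ) else 0) ≤ (if n ≤ j + t then (1:ℤ) else 0)
    split_ifs with h1 h2 <;> omega
  have hδ01 : ∀ i, 0 ≤ δ i ∧ δ i ≤ 1 := by
    intro i
    show 0 ≤ (if n ≤ i + t then (1:ℤ) else 0) ∧ (if n ≤ i + t then (1:ℤ) else 0) ≤ 1
    split_ifs <;> omega
  have hδsum : ∑ i ∈ Finset.range n, δ i = (t : ℤ) := by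
    have h1 : ∑ i ∈ Finset.range n, δ i =
        (((Finset.range n).filter (fun i => n ≤ i + t)).card : ℤ) := by
      rw [Finset.sum_boole]
    have h2 : (Finset.range n).filter (fun i => n ≤ i + t) = Finset.Ico (n - t) n := by
      ext i
      simp only [Finset.mem_filter, Finset.mem_range, Finset.mem_Ico]
      omega
    rw [h1, h2, Nat.card_Ico]
    congr 1
    omega
  let y : ℕ → ℤ := fun i => s i - q - δ i
  have hysum : ∑ i ∈ Finset.range n, y i = 0 := by
    show ∑ i ∈ Finset.range n, (s i - q - δ i) = 0
    rw [Finset.sum_sub_distrib, Finset.sum_sub_distrib, hδsum, Finset.sum_const,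
      Finset.card_range, nsmul_eq_mul, ht]
    have : (∑ i ∈ Finset.range n, s i) = S := rfl
    rw [this]
    omega
  let χ : ℕ → ℤ := fun i => ∑ tt ∈ Finset.range i, y (tt + 1)
  have hχ0 : χ 0 = 0 := rfl
  have hχsucc : ∀ i, χ (i + 1) = χ i + y (i + 1) := by
    intro i
    exact Finset.sum_range_succ (fun tt => y (tt + 1)) i
  have hχlast : χ (n - 1) = -y 0 := by
    have h1 : ∑ i ∈ Finset.range ((n-1) + 1), y i =
        (∑ tt ∈ Finset.range (n-1), y (tt + 1)) + y 0 := Finset.sum_range_succ' y (n-1)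
    have h2 : (n - 1) + 1 = n := by omega
    rw [h2] at h1
    rw [hysum] at h1
    have : χ (n-1) = ∑ tt ∈ Finset.range (n-1), y (tt + 1) := rfl
    omega
  let x : V → ℤ := fun v => χ (idx v)
  have hxw : ∀ i, i < n → x (w i) = χ i := by
    intro i hi
    show χ (idx (w i)) = χ i
    rw [hidxw i hi]
  -- degree two, cast
  have hvdeg : ∀ v, (G.vdeg v : ℤ) = 2 := by
    intro v
    rw [hC.2 v]
    norm_num
  have hssucc : ∀ i, s (i + 1) = s i + F i := by
    intro i
    exact Finset.sum_range_succ F i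
  refine ⟨f + G.lapApply x, ⟨x, rfl⟩, ?_⟩
  intro v
  obtain ⟨i, hi, hwi⟩ := hsurj v
  rw [← hwi]
  show 0 ≤ f (w i) + (x (w i) * (G.vdeg (w i) : ℤ) - ∑ u, x u * (G.e u (w i) : ℤ))
  rw [hvdeg, hxw i hi]
  by_cases hi0 : i = 0
  · -- i = 0 : neighbours w 1 and w (n-1)
    subst hi0
    have ha : G.e (w 0) (w 1) ≠ 0 := by rw [hadj 0]; omega
    have hb : G.e (w 0) (w (n-1)) ≠ 0 := by
      have h1 := hadj (n-1)
      have h2 : n - 1 + 1 = n := by omega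
      rw [h2, hwrap] at h1
      rw [G.symm, h1]
      omega
    have hab : w 1 ≠ w (n-1) := by
      intro h'
      have := hinj _ _ (by omega) (by omega) h'
      omega
    rw [CycleAux.pair_sum G x (w 0) (w 1) (w (n-1))
      (CycleAux.nbr_decomp G hC hcard (w 0) (w 1) (w (n-1)) ha hb hab)]
    rw [hxw 1 (by omega), hxw (n-1) (by omega), hχlast]
    have h1 : χ 1 = χ 0 + y 1 := hχsucc 0
    have hyv0 : y 0 = s 0 - q - δ 0 := rfl
    have hyv1 : y 1 = s 1 - q - δ 1 := rfl
    have hs0 : s 0 = 0 := rfl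
    have hs1 : s 1 = s 0 + F 0 := hssucc 0
    have hδm := hδmono 0 1 (by omega)
    have hF : f (w 0) = F 0 := rfl
    rw [hF]
    linarith [hχ0]
  · by_cases hin : i = n - 1
    · -- i = n-1 : neighbours w (n-2) and w 0
      subst hin
      have ha : G.e (w (n-1)) (w (n-2)) ≠ 0 := by
        have h1 := hadj (n-2)
        have h2 : n - 2 + 1 = n - 1 := by omega
        rw [h2] at h1
        rw [G.symm, h1]
        omega
      have hb : G.e (w (n-1)) (w 0) ≠ 0 := by
        have h1 := hadj (n-1)
        have h2 : n - 1 + 1 = n := by omega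
        rw [h2, hwrap] at h1
        rw [h1]
        omega
      have hab : w (n-2) ≠ w 0 := by
        intro h'
        have := hinj _ _ (by omega) (by omega) h'
        omega
      rw [CycleAux.pair_sum G x (w (n-1)) (w (n-2)) (w 0)
        (CycleAux.nbr_decomp G hC hcard (w (n-1)) (w (n-2)) (w 0) ha hb hab)]
      rw [hxw (n-2) (by omega), hxw 0 (by omega), hχ0]
      have h1 : χ (n-1) = χ (n-2) + y (n-1) := by
        have := hχsucc (n-2)
        have h2 : n - 2 + 1 = n - 1 := by omega
        rw [h2] at this
        exact this
      have hyv0 : y 0 = s 0 - q - δ 0 := rfl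
      have hyvn : y (n-1) = s (n-1) - q - δ (n-1) := rfl
      have hs0 : s 0 = 0 := rfl
      have hsn' : s n = s (n-1) + F (n-1) := by
        have := hssucc (n-1)
        have h2 : n - 1 + 1 = n := by omega
        rw [h2] at this
        exact this
      have hδa := hδ01 0
      have hδb := hδ01 (n-1)
      have hF : f (w (n-1)) = F (n-1) := rfl
      rw [hF, hχlast]
      linarith
    · -- interior : neighbours w (i-1) and w (i+1)
      have hi1 : 1 ≤ i := by omega
      have hi2 : i + 1 < n := by omega
      have ha : G.e (w i) (w (i-1)) ≠ 0 := by
        have h1 := hadj (i-1)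
        have h2 : i - 1 + 1 = i := by omega
        rw [h2] at h1
        rw [G.symm, h1]
        omega
      have hb : G.e (w i) (w (i+1)) ≠ 0 := by rw [hadj i]; omega
      have hab : w (i-1) ≠ w (i+1) := by
        intro h'
        have := hinj _ _ (by omega) (by omega) h'
        omega
      rw [CycleAux.pair_sum G x (w i) (w (i-1)) (w (i+1))
        (CycleAux.nbr_decomp G hC hcard (w i) (w (i-1)) (w (i+1)) ha hb hab)]
      rw [hxw (i-1) (by omega), hxw (i+1) (by omega)]
      have h1 : χ i = χ (i-1) + y i := by
        have := hχsucc (i-1)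
        have h2 : i - 1 + 1 = i := by omega
        rw [h2] at this
        exact this
      have h3 : χ (i+1) = χ i + y (i+1) := hχsucc i
      have hyi : y i = s i - q - δ i := rfl
      have hyi1 : y (i+1) = s (i+1) - q - δ (i+1) := rfl
      have hsi : s (i+1) = s i + F i := hssucc i
      have hδm := hδmono i (i+1) (by omega)
      have hF : f (w i) = F i := rfl
      rw [hF]
      linarith
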